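/- arXiv:2002.03041 — 3 statements merged into one kernel-verified Lean document; each statement's English description precedes it below -/
import Mathlib

section
/- Let K be a field and m ≥ 1. For formal power series φ, ψ ∈ K[[t_1,…,t_m]], the Newton polygon of the support of the product equals the Minkowski sum of the individual Newton polygons: N(Supp(φ·ψ)) = N(Supp(φ)) + N(Supp(ψ)) = N(Supp(φ) + Supp(ψ)). -/
open Pointwise

noncomputable section

/-- The embedding of `ℤ_{≥0}^m` into `ℝ^m`. -/
def emb {m : ℕ} (x : Fin m →₀ ℕ) : Fin m → ℝ := fun i => (x i : ℝ)

/-- The Newton polygon of `X ⊆ ℤ_{≥0}^m`: the convex hull (in `ℝ^m`) of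
`X + ℤ_{≥0}^m`. -/
def newton {m : ℕ} (X : Set (Fin m →₀ ℕ)) : Set (Fin m → ℝ) :=
  convexHull ℝ (emb '' (X + (Set.univ : Set (Fin m →₀ ℕ))))

/-- The vertex set of `X`: the elements `x ∈ X` with `x ∉ N(X \ {x})`. -/
def vert {m : ℕ} (X : Set (Fin m →₀ ℕ)) : Set (Fin m →₀ ℕ) :=
  {x ∈ X | emb x ∉ newton (X \ {x})}

variable {K : Type} [Field K]

/-- The support of a multivariate formal power series. -/
def supp {m : ℕ} (φ : MvPowerSeries (Fin m) K) : Set (Fin m →₀ ℕ) :=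
  {L | MvPowerSeries.coeff L φ ≠ 0}

/-- The tropicalization of a multivariate formal power series: the vertex set of
its support. -/
def trop {m : ℕ} (φ : MvPowerSeries (Fin m) K) : Set (Fin m →₀ ℕ) :=
  vert (supp φ)

namespace NewtonAux

variable {m : ℕ}

lemma emb_add (a b : Fin m →₀ ℕ) : emb (a + b) = emb a + emb b := by
  funext i
  simp [emb]

lemma emb_injective : Function.Injective (emb (m := m)) := by
  intro a b h
  ext i
  have := congrFun h i
  simp only [emb] at this
  exact_mod_cast this

lemma emb_image_add (A B : Set (Fin m →₀ ℕ)) :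
    emb '' (A + B) = emb '' A + emb '' B := by
  ext w
  constructor
  · rintro ⟨z, ⟨a, ha, b, hb, rfl⟩, rfl⟩
    exact ⟨emb a, ⟨a, ha, rfl⟩, emb b, ⟨b, hb, rfl⟩, (emb_add a b).symm⟩
  · rintro ⟨-, ⟨a, ha, rfl⟩, -, ⟨b, hb, rfl⟩, rfl⟩
    exact ⟨a + b, ⟨a, ha, b, hb, rfl⟩, emb_add a b⟩

lemma univ_add_univ :
    (Set.univ : Set (Fin m →₀ ℕ)) + Set.univ = Set.univ := by
  apply Set.eq_univ_of_forall
  intro a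
  exact ⟨a, trivial, 0, trivial, add_zero a⟩

lemma newton_eq (X : Set (Fin m →₀ ℕ)) :
    newton X = convexHull ℝ (emb '' X) +
      convexHull ℝ (emb '' (Set.univ : Set (Fin m →₀ ℕ))) := by
  rw [newton, emb_image_add, convexHull_add]

lemma hull_univ_add_hull_univ :
    convexHull ℝ (emb '' (Set.univ : Set (Fin m →₀ ℕ))) +
      convexHull ℝ (emb '' (Set.univ : Set (Fin m →₀ ℕ))) =
      convexHull ℝ (emb '' (Set.univ : Set (Fin m →₀ ℕ))) := by
  rw [← convexHull_add, ← emb_image_add, univ_add_univ]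

lemma newton_add (X Y : Set (Fin m →₀ ℕ)) :
    newton X + newton Y = newton (X + Y) := by
  rw [newton_eq X, newton_eq Y, newton_eq (X + Y), emb_image_add, convexHull_add]
  rw [add_add_add_comm, hull_univ_add_hull_univ]

lemma newton_mono {X Y : Set (Fin m →₀ ℕ)} (h : X ⊆ Y) : newton X ⊆ newton Y :=
  convexHull_mono (Set.image_mono (Set.add_subset_add_right h))

lemma mem_newton_of_mem {X : Set (Fin m →₀ ℕ)} {x : Fin m →₀ ℕ} (hx : x ∈ X) :
    emb x ∈ newton X :=
  subset_convexHull ℝ _ ⟨x, ⟨x, hx, 0, trivial, add_zero x⟩, rfl⟩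

/-- the closed positive orthant -/
def orthant (m : ℕ) : Set (Fin m → ℝ) := {w | ∀ i, 0 ≤ w i}

lemma orthant_eq_pi : orthant m = Set.pi Set.univ (fun _ : Fin m => Set.Ici (0 : ℝ)) := by
  ext w
  simp [orthant, Set.mem_pi]
  rfl

lemma convex_orthant : Convex ℝ (orthant m) := by
  rw [orthant_eq_pi]
  exact convex_pi fun i _ => convex_Ici 0

lemma isClosed_orthant : IsClosed (orthant m) := by
  rw [orthant_eq_pi]
  exact isClosed_set_pi fun i _ => isClosed_Ici

lemma convexHull_range_natCast :
    convexHull ℝ (Set.range ((↑) : ℕ → ℝ)) = Set.Ici 0 := by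
  apply subset_antisymm
  · apply convexHull_min _ (convex_Ici 0)
    rintro - ⟨n, rfl⟩
    exact Set.mem_Ici.mpr n.cast_nonneg
  · intro t ht
    have hle : ((⌊t⌋₊ : ℝ)) ≤ ((⌊t⌋₊ + 1 : ℕ) : ℝ) := by
      push_cast; linarith
    have hseg : t ∈ segment ℝ ((⌊t⌋₊ : ℝ)) ((⌊t⌋₊ + 1 : ℕ) : ℝ) := by
      rw [segment_eq_Icc hle]
      constructor
      · exact Nat.floor_le ht
      · push_cast
        exact le_of_lt (Nat.lt_floor_add_one t)
    rw [← convexHull_pair] at hseg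
    refine convexHull_mono ?_ hseg
    rintro x hx
    rcases hx with h | h
    · exact ⟨⌊t⌋₊, h.symm⟩
    · exact ⟨⌊t⌋₊ + 1, by simpa using h.symm⟩

lemma emb_univ_eq :
    emb '' (Set.univ : Set (Fin m →₀ ℕ)) =
      Set.pi Set.univ (fun _ : Fin m => Set.range ((↑) : ℕ → ℝ)) := by
  ext w
  constructor
  · rintro ⟨x, -, rfl⟩ i -
    exact ⟨x i, rfl⟩
  · intro h
    have h' : ∀ i, ∃ n : ℕ, (n : ℝ) = w i := fun i => h i trivial
    choose n hn using h'
    refine ⟨Finsupp.equivFunOnFinite.symm n, trivial, funext fun i => ?_⟩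
    simp only [emb, Finsupp.coe_equivFunOnFinite_symm]
    exact hn i

lemma convexHull_emb_univ :
    convexHull ℝ (emb '' (Set.univ : Set (Fin m →₀ ℕ))) = orthant m := by
  rw [emb_univ_eq, convexHull_pi, orthant_eq_pi]
  ext w
  simp [Set.mem_pi, convexHull_range_natCast]

lemma newton_eq_orthant (X : Set (Fin m →₀ ℕ)) :
    newton X = convexHull ℝ (emb '' X) + orthant m := by
  rw [newton_eq, convexHull_emb_univ]

/-- every nonempty upward-closed set of lattice points has a finite set of minimal
elements generating it -/
lemma newton_isClosed (X : Set (Fin m →₀ ℕ)) : IsClosed (newton X) := by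
  rcases Set.eq_empty_or_nonempty X with rfl | hX
  · have : newton (∅ : Set (Fin m →₀ ℕ)) = ∅ := by
      rw [newton, Set.empty_add, Set.image_empty, convexHull_empty]
    rw [this]; exact isClosed_empty
  -- the set of minimal elements of T := X + univ
  set T : Set (Fin m →₀ ℕ) := X + Set.univ with hT
  have hup : ∀ t ∈ T, ∀ s, t ≤ s → s ∈ T := by
    rintro t ⟨x, hx, u, -, rfl⟩ s hs
    have hxs : x ≤ s := le_trans (le_add_right (le_refl x)) hs
    exact ⟨x, hx, s - x, trivial, (add_tsub_cancel_of_le hxs)⟩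
  set M : Set (Fin m →₀ ℕ) := {t ∈ T | ∀ t' ∈ T, t' ≤ t → t' = t} with hM
  have hwf : WellFounded ((· < ·) : (Fin m →₀ ℕ) → (Fin m →₀ ℕ) → Prop) :=
    (Set.isWF_univ_iff.mp (Set.isPWO_of_wellQuasiOrderedLE _).isWF).wf
  -- every element of T is above a minimal element
  have hmin : ∀ t ∈ T, ∃ s ∈ M, s ≤ t := by
    intro t ht
    obtain ⟨s, hs, hsmin⟩ := hwf.has_min {t' ∈ T | t' ≤ t} ⟨t, ht, le_refl t⟩
    refine ⟨s, ⟨hs.1, ?_⟩, hs.2⟩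
    intro t' ht' hle
    by_contra hne
    exact hsmin t' ⟨ht', le_trans hle hs.2⟩ (lt_of_le_of_ne hle hne)
  -- M is finite
  have hMfin : M.Finite := by
    by_contra hinf
    have hinf' : M.Infinite := hinf
    have f := hinf'.natEmbedding
    obtain ⟨i, j, hij, hle⟩ := Set.isPWO_of_wellQuasiOrderedLE M (fun n => f n)
    have := ((f j).2 : (f j : Fin m →₀ ℕ) ∈ M).2 (f i) ((f i).2).1 hle
    have hne : (f i : Fin m →₀ ℕ) ≠ (f j : Fin m →₀ ℕ) := fun h =>
      (Nat.ne_of_lt hij) (f.injective (Subtype.ext h))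
    exact hne this
  -- T = M + univ
  have hTM : T = M + Set.univ := by
    apply subset_antisymm
    · intro t ht
      obtain ⟨s, hs, hle⟩ := hmin t ht
      exact ⟨s, hs, t - s, trivial, add_tsub_cancel_of_le hle⟩
    · rintro - ⟨s, hs, u, -, rfl⟩
      exact hup s hs.1 (s + u) (le_add_right (le_refl s))
  have : newton X = convexHull ℝ (emb '' M) + orthant m := by
    rw [newton, ← hT, hTM, emb_image_add, convexHull_add, convexHull_emb_univ]
  rw [this]
  exact isClosed_orthant.add_left_of_isCompact
    ((hMfin.image emb).isCompact_convexHull ℝ)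

lemma newton_subset_orthant (X : Set (Fin m →₀ ℕ)) : newton X ⊆ orthant m := by
  apply convexHull_min _ convex_orthant
  rintro - ⟨x, -, rfl⟩ i
  exact (x i).cast_nonneg

lemma supp_mul_subset (φ ψ : MvPowerSeries (Fin m) K) :
    supp (φ * ψ) ⊆ supp φ + supp ψ := by
  classical
  intro L hL
  rw [supp, Set.mem_setOf_eq, MvPowerSeries.coeff_mul] at hL
  obtain ⟨p, hp, hne⟩ := Finset.exists_ne_zero_of_sum_ne_zero hL
  exact ⟨p.1, left_ne_zero_of_mul hne, p.2, right_ne_zero_of_mul hne,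
    Finset.HasAntidiagonal.mem_antidiagonal.mp hp⟩

/-- existence of a minimizer of a positive linear functional, with lexicographic
tie-breaking -/
lemma exists_good_min (g : Fin m → ℝ) {ε : ℝ} (hε : 0 < ε) (hg : ∀ i, ε ≤ g i)
    (X : Set (Fin m →₀ ℕ)) {x : Fin m →₀ ℕ} (hx : x ∈ X) {c : ℝ}
    (hc : ∑ i, (x i : ℝ) * g i ≤ c) :
    ∃ z ∈ X, (∀ x' ∈ X, ∑ i, (z i : ℝ) * g i ≤ ∑ i, (x' i : ℝ) * g i) ∧
      ∀ x' ∈ X, ∑ i, (x' i : ℝ) * g i = ∑ i, (z i : ℝ) * g i →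
        toLex z ≤ toLex x' := by
  classical
  set Lg : (Fin m →₀ ℕ) → ℝ := fun w => ∑ i, (w i : ℝ) * g i with hLg
  have hterm : ∀ (w : Fin m →₀ ℕ) i, 0 ≤ (w i : ℝ) * g i := fun w i =>
    mul_nonneg (w i).cast_nonneg (le_trans (le_of_lt hε) (hg i))
  have hsingle : ∀ (w : Fin m →₀ ℕ) i, (w i : ℝ) * g i ≤ Lg w := fun w i =>
    Finset.single_le_sum (fun j _ => hterm w j) (Finset.mem_univ i)
  set N : ℕ := ⌈c / ε⌉₊ with hN
  set b : Fin m →₀ ℕ := Finsupp.equivFunOnFinite.symm (fun _ => N) with hb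
  set X₀ : Set (Fin m →₀ ℕ) := {x' ∈ X | Lg x' ≤ c} with hX₀
  have hsub : X₀ ⊆ Set.Icc 0 b := by
    rintro x' ⟨-, hx'⟩
    refine ⟨zero_le, ?_⟩
    intro i
    have h1 : (x' i : ℝ) * ε ≤ c :=
      le_trans (le_trans (mul_le_mul_of_nonneg_left (hg i) (x' i).cast_nonneg)
        (hsingle x' i)) hx'
    have h2 : (x' i : ℝ) ≤ c / ε := (le_div_iff₀ hε).mpr h1
    have h3 : (x' i : ℝ) ≤ (N : ℝ) := le_trans h2 (Nat.le_ceil _)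
    have : x' i ≤ N := by exact_mod_cast h3
    simpa [hb, Finsupp.equivFunOnFinite] using this
  have hfin : X₀.Finite := (Set.finite_Icc 0 b).subset hsub
  have hne : X₀.Nonempty := ⟨x, hx, hc⟩
  obtain ⟨z, hz, hzmin⟩ := Set.exists_min_image X₀
    (fun w => (toLex (Lg w, toLex w) : ℝ ×ₗ Lex (Fin m →₀ ℕ))) hfin hne
  have hzc : Lg z ≤ c := hz.2
  have key : ∀ x' ∈ X₀, Lg z ≤ Lg x' ∧ (Lg x' = Lg z → toLex z ≤ toLex x') := by
    intro x' hx'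
    have := hzmin x' hx'
    rcases Prod.Lex.le_iff.mp this with h | h
    · exact ⟨le_of_lt h, fun he => absurd he (ne_of_gt h)⟩
    · exact ⟨le_of_eq h.1, fun _ => h.2⟩
  refine ⟨z, hz.1, ?_, ?_⟩
  · intro x' hx'
    by_cases h : Lg x' ≤ c
    · exact (key x' ⟨hx', h⟩).1
    · exact le_trans hzc (le_of_not_ge h)
  · intro x' hx' heq
    have heq' : Lg x' = Lg z := heq
    have hx'0 : x' ∈ X₀ := ⟨hx', by rw [heq']; exact hzc⟩
    exact (key x' hx'0).2 heq'

end NewtonAux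

open NewtonAux in
/-- The key lemma: each point of `Supp φ + Supp ψ + ℤ_{≥0}^m` lies in the Newton
polygon of `Supp (φ * ψ)`. -/
lemma emb_mem_newton_supp_mul {m : ℕ} (φ ψ : MvPowerSeries (Fin m) K)
    {x y : Fin m →₀ ℕ} (hx : x ∈ supp φ) (hy : y ∈ supp ψ) (u : Fin m →₀ ℕ) :
    emb (x + y + u) ∈ newton (supp (φ * ψ)) := by
  classical
  set S := supp (φ * ψ) with hS
  set v : Fin m →₀ ℕ := x + y + u with hv
  by_contra hcon
  obtain ⟨f, c, hfv, hfS⟩ :=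
    geometric_hahn_banach_point_closed (convex_convexHull ℝ _)
      (newton_isClosed S) hcon
  set ℓ : Fin m → ℝ := fun i => f (Pi.single i 1) with hℓ
  -- representation of f on lattice points
  have hrep : ∀ w : Fin m →₀ ℕ, f (emb w) = ∑ i, (w i : ℝ) * ℓ i := by
    intro w
    have h1 : emb w = ∑ i, (w i : ℝ) • (Pi.single i 1 : Fin m → ℝ) := by
      funext j
      simp [emb, Pi.single_apply, Finset.sum_apply, smul_eq_mul, mul_ite]
    rw [h1, map_sum]
    apply Finset.sum_congr rfl
    intro i _
    rw [map_smul]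
    simp [hℓ]
  -- S is nonempty
  have hφ : φ ≠ 0 := by
    intro h
    have hx' : MvPowerSeries.coeff x φ ≠ 0 := hx
    rw [h] at hx'
    exact hx' (map_zero _)
  have hψ : ψ ≠ 0 := by
    intro h
    have hy' : MvPowerSeries.coeff y ψ ≠ 0 := hy
    rw [h] at hy'
    exact hy' (map_zero _)
  have hprod : φ * ψ ≠ 0 := mul_ne_zero hφ hψ
  have hSne : ∃ s, s ∈ S := by
    by_contra hnone
    push_neg at hnone
    apply hprod
    apply MvPowerSeries.ext
    intro n
    rw [map_zero]
    by_contra hne0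
    exact hnone n hne0
  obtain ⟨s0, hs0⟩ := hSne
  have hfS' : ∀ s ∈ S, c < f (emb s) := fun s hs => hfS _ (mem_newton_of_mem hs)
  -- evaluation at single
  have hsingle_eval : ∀ (i : Fin m) (n : ℕ),
      f (emb (Finsupp.single i n)) = n * ℓ i := by
    intro i n
    rw [hrep]
    rw [Finset.sum_eq_single i]
    · simp [Finsupp.single_apply]
    · intro j _ hj
      simp [Finsupp.single_apply, Ne.symm hj]
    · intro h
      exact absurd (Finset.mem_univ i) h
  -- the coefficients of f are nonnegative
  have hℓnn : ∀ i, 0 ≤ ℓ i := by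
    intro i
    by_contra hneg
    push_neg at hneg
    obtain ⟨n, hn⟩ := exists_nat_gt ((f (emb s0) - c) / (-ℓ i))
    have hmem : s0 + Finsupp.single i n ∈ S + Set.univ :=
      ⟨s0, hs0, Finsupp.single i n, trivial, rfl⟩
    have h1 : c < f (emb (s0 + Finsupp.single i n)) :=
      hfS _ (subset_convexHull ℝ _ ⟨_, hmem, rfl⟩)
    rw [emb_add, map_add, hsingle_eval] at h1
    have h2 : (f (emb s0) - c) < n * (-ℓ i) := by
      have := (div_lt_iff₀ (by linarith : (0:ℝ) < -ℓ i)).mp hn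
      linarith
    linarith
  -- the perturbed functional L
  set D : ℝ := ∑ i, (v i : ℝ) with hD
  have hD0 : 0 ≤ D := Finset.sum_nonneg fun i _ => (v i).cast_nonneg
  set ε : ℝ := (c - f (emb v)) / (D + 1) with hεdef
  have hεpos : 0 < ε := div_pos (by linarith) (by linarith)
  set g : Fin m → ℝ := fun i => ℓ i + ε with hgdef
  have hgε : ∀ i, ε ≤ g i := by
    intro i
    have := hℓnn i
    simp only [hgdef]
    linarith
  set L : (Fin m →₀ ℕ) → ℝ := fun w => ∑ i, (w i : ℝ) * g i with hLdef
  have hLrep : ∀ w, L w = f (emb w) + ε * ∑ i, (w i : ℝ) := by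
    intro w
    rw [hrep w, Finset.mul_sum, ← Finset.sum_add_distrib]
    apply Finset.sum_congr rfl
    intro i _
    simp only [hgdef]
    ring
  have hLadd : ∀ a b, L (a + b) = L a + L b := by
    intro a b
    simp only [hLdef, Finsupp.add_apply, Nat.cast_add, add_mul]
    rw [Finset.sum_add_distrib]
  have hLnn : ∀ w, 0 ≤ L w := fun w =>
    Finset.sum_nonneg fun i _ =>
      mul_nonneg (w i).cast_nonneg (le_trans (le_of_lt hεpos) (hgε i))
  have hLv : L v < c := by
    have h1 : L v = f (emb v) + ε * D := hLrep v
    have h2 : ε * (D + 1) = c - f (emb v) := by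
      rw [hεdef]
      field_simp
    nlinarith
  have hLS : ∀ s ∈ S, c < L s := by
    intro s hs
    have h1 := hfS' s hs
    have h2 : 0 ≤ ε * ∑ i, (s i : ℝ) :=
      mul_nonneg (le_of_lt hεpos)
        (Finset.sum_nonneg fun i _ => (s i).cast_nonneg)
    rw [hLrep]
    linarith
  have hvsplit : L v = L x + L y + L u := by
    rw [hv, hLadd, hLadd]
  have hxv : L x ≤ L v := by
    have h1 := hLnn y
    have h2 := hLnn u
    linarith
  have hyv : L y ≤ L v := by
    have h1 := hLnn x
    have h2 := hLnn u
    linarith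
  obtain ⟨xh, hxhX, hxhmin, hxhlex⟩ :=
    exists_good_min g hεpos hgε (supp φ) hx hxv
  obtain ⟨yh, hyhX, hyhmin, hyhlex⟩ :=
    exists_good_min g hεpos hgε (supp ψ) hy hyv
  -- the coefficient of φ * ψ at xh + yh is a single product
  have hcoeff : MvPowerSeries.coeff (xh + yh) (φ * ψ) =
      MvPowerSeries.coeff xh φ * MvPowerSeries.coeff yh ψ := by
    rw [MvPowerSeries.coeff_mul]
    apply Finset.sum_eq_single_of_mem (xh, yh) (Finset.HasAntidiagonal.mem_antidiagonal.mpr rfl)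
    rintro ⟨p₁, p₂⟩ hp hne
    rw [Finset.HasAntidiagonal.mem_antidiagonal] at hp
    by_contra hterm
    have hp1 : p₁ ∈ supp φ := left_ne_zero_of_mul hterm
    have hp2 : p₂ ∈ supp ψ := right_ne_zero_of_mul hterm
    have l1 : L xh ≤ L p₁ := hxhmin p₁ hp1
    have l2 : L yh ≤ L p₂ := hyhmin p₂ hp2
    have lsum : L p₁ + L p₂ = L xh + L yh := by
      rw [← hLadd, ← hLadd, hp]
    have e1 : L p₁ = L xh := by linarith
    have e2 : L p₂ = L yh := by linarith
    have lex1 : toLex xh ≤ toLex p₁ := hxhlex p₁ hp1 e1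
    have lex2 : toLex yh ≤ toLex p₂ := hyhlex p₂ hp2 e2
    have hadd : toLex p₁ + toLex p₂ = toLex xh + toLex yh := by
      rw [← toLex_add, ← toLex_add, hp]
    have hx1 : toLex p₁ = toLex xh := by
      by_contra hne1
      have hlt : toLex xh < toLex p₁ := lt_of_le_of_ne lex1 (Ne.symm hne1)
      have hcontr : toLex xh + toLex yh < toLex p₁ + toLex p₂ :=
        add_lt_add_of_lt_of_le hlt lex2
      rw [hadd] at hcontr
      exact lt_irrefl _ hcontr
    have hp₁ : p₁ = xh := toLex.injective hx1
    rw [hp₁] at hp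
    have hp₂ : p₂ = yh := add_left_cancel hp
    exact hne (Prod.ext hp₁ hp₂)
  have hsS : (xh + yh) ∈ S := by
    have : MvPowerSeries.coeff (xh + yh) (φ * ψ) ≠ 0 := by
      rw [hcoeff]
      exact mul_ne_zero hxhX hyhX
    exact this
  have hc1 : c < L (xh + yh) := hLS _ hsS
  have hc2 : L (xh + yh) ≤ L v := by
    rw [hLadd]
    have a1 : L xh ≤ L x := hxhmin x hx
    have a2 : L yh ≤ L y := hyhmin y hy
    have a3 := hLnn u
    linarith
  linarith

/-- The Newton polygon of the support of a product of power series is the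
Minkowski sum of the Newton polygons, which is also the Newton polygon of the
Minkowski sum of the supports. -/
theorem newton_supp_mul (K : Type) [Field K] (m : ℕ) (hm : 1 ≤ m)
    (φ ψ : MvPowerSeries (Fin m) K) :
    newton (supp (φ * ψ)) = newton (supp φ) + newton (supp ψ) ∧
    newton (supp φ) + newton (supp ψ) = newton (supp φ + supp ψ) := by
  constructor
  · apply subset_antisymm
    · rw [NewtonAux.newton_add]
      exact NewtonAux.newton_mono (NewtonAux.supp_mul_subset φ ψ)
    · rw [NewtonAux.newton_add]
      unfold newton
      apply convexHull_min _ (convex_convexHull ℝ _)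
      rintro - ⟨z, ⟨w, ⟨x, hx, y, hy, rfl⟩, u, -, rfl⟩, rfl⟩
      exact emb_mem_newton_supp_mul φ ψ hx hy u
  · exact NewtonAux.newton_add _ _

end
end

section
/- Let K be a field and m ≥ 1. The tropicalization map trop : K[[t_1,…,t_m]] → P(ℤ_{≥0}^m), trop(φ) = Vert(Supp(φ)), is multiplicative: for all φ, ψ ∈ K[[t_1,…,t_m]], trop(φ·ψ) = trop(φ) ⊙ trop(ψ). Moreover trop(0) = ∅ and trop(1) = trop(−1) = {(0,…,0)}. -/
open Pointwise

noncomputable section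

variable {K : Type} [Field K]

/-- Tropical product of supports (via Minkowski sum). -/
def odot {m : ℕ} (S T : Set (Fin m →₀ ℕ)) : Set (Fin m →₀ ℕ) := vert (S + T)

namespace TropAux
variable {m : ℕ}
lemma emb_add (a b : Fin m →₀ ℕ) : emb (a + b) = emb a + emb b := by
  funext i; simp [emb]
lemma emb_image_add (Y Z : Set (Fin m →₀ ℕ)) : emb '' (Y + Z) = emb '' Y + emb '' Z := by
  ext p
  simp only [Set.mem_image, Set.mem_add]
  constructor
  · rintro ⟨x, ⟨y, hy, z, hz, rfl⟩, rfl⟩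
    exact ⟨emb y, ⟨y, hy, rfl⟩, emb z, ⟨z, hz, rfl⟩, (emb_add y z).symm⟩
  · rintro ⟨_, ⟨y, hy, rfl⟩, _, ⟨z, hz, rfl⟩, rfl⟩
    exact ⟨y + z, ⟨y, hy, z, hz, rfl⟩, emb_add y z⟩
lemma emb_zero : emb (0 : Fin m →₀ ℕ) = 0 := by funext i; simp [emb]

lemma emb_inj : Function.Injective (emb (m := m)) := by
  intro a b h
  ext i
  have := congrFun h i
  simpa [emb] using this

lemma emb_le {a b : Fin m →₀ ℕ} : a ≤ b ↔ emb a ≤ emb b := by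
  rw [Finsupp.le_def, Pi.le_def]
  constructor
  · intro h i; simpa [emb] using h i
  · intro h i; have := h i; simp only [emb] at this; exact_mod_cast this

lemma emb_nonneg (a : Fin m →₀ ℕ) : (0 : Fin m → ℝ) ≤ emb a := by
  intro i; simp only [emb, Pi.zero_apply]; positivity

lemma convex_orthant : Convex ℝ {w : Fin m → ℝ | 0 ≤ w} := by
  intro x hx y hy a b ha hb hab
  intro i
  have hx' := hx i
  have hy' := hy i
  simp only [Pi.zero_apply] at hx' hy' ⊢
  simp only [Pi.add_apply, Pi.smul_apply, smul_eq_mul]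
  nlinarith

lemma convexHull_emb_univ :
    convexHull ℝ (emb '' (Set.univ : Set (Fin m →₀ ℕ))) = {w : Fin m → ℝ | 0 ≤ w} := by
  apply le_antisymm
  · apply convexHull_min _ convex_orthant
    rintro _ ⟨x, -, rfl⟩
    exact emb_nonneg x
  · intro w hw
    obtain ⟨N, hN⟩ := exists_nat_ge (∑ i, w i)
    set N' : ℕ := N + 1 with hN'def
    have hN'pos : (0:ℝ) < (N' : ℝ) := by positivity
    have hsum : ∑ i, w i ≤ (N' : ℝ) := by rw [hN'def]; push_cast; linarith
    set lam : Option (Fin m) → ℝ :=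
      fun o => o.elim (1 - (∑ i, w i)/(N':ℝ)) (fun i => w i / (N':ℝ)) with hlam
    set z : Option (Fin m) → (Fin m → ℝ) :=
      fun o => o.elim (emb (0 : Fin m →₀ ℕ)) (fun i => emb (Finsupp.single i N')) with hz
    have hlam_sum : ∑ o : Option (Fin m), lam o = 1 := by
      rw [Fintype.sum_option]
      simp only [hlam, Option.elim]
      rw [← Finset.sum_div]
      ring
    have hlam_nonneg : ∀ o ∈ (Finset.univ : Finset (Option (Fin m))), 0 ≤ lam o := by
      rintro (_|i) -
      · simp only [hlam, Option.elim]
        have h1 : (∑ i, w i)/(N':ℝ) ≤ 1 := by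
          rw [div_le_one hN'pos]; exact hsum
        linarith
      · simp only [hlam, Option.elim]
        have := hw i
        simp only [Pi.zero_apply] at this
        positivity
    have hmem : ∀ o ∈ (Finset.univ : Finset (Option (Fin m))),
        z o ∈ emb '' (Set.univ : Set (Fin m →₀ ℕ)) := by
      rintro (_|i) -
      · exact ⟨0, Set.mem_univ _, rfl⟩
      · exact ⟨Finsupp.single i N', Set.mem_univ _, rfl⟩
    have := Finset.centerMass_mem_convexHull (Finset.univ) hlam_nonneg
      (by rw [hlam_sum]; norm_num) hmem
    have hcm : Finset.univ.centerMass lam z = w := by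
      rw [Finset.centerMass_eq_of_sum_1 _ _ hlam_sum]
      rw [Fintype.sum_option]
      funext j
      simp only [hlam, hz, Option.elim, Pi.add_apply, Pi.smul_apply, smul_eq_mul,
        Finset.sum_apply]
      have h0 : emb (0 : Fin m →₀ ℕ) j = 0 := by simp [emb]
      rw [h0, mul_zero, zero_add]
      have : ∀ i : Fin m, w i / (N':ℝ) * emb (Finsupp.single i N') j
          = if i = j then w i else 0 := by
        intro i
        simp only [emb, Finsupp.single_apply]
        by_cases h : i = j
        · subst h
          simp only [if_pos rfl]
          push_cast
          field_simp
        · simp [h]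
      rw [Finset.sum_congr rfl (fun i _ => this i)]
      simp
    rw [hcm] at this
    exact this

lemma newton_eq (Y : Set (Fin m →₀ ℕ)) :
    newton Y = convexHull ℝ (emb '' Y) + {w : Fin m → ℝ | 0 ≤ w} := by
  rw [newton, emb_image_add, convexHull_add, convexHull_emb_univ]

lemma mem_newton {Y : Set (Fin m →₀ ℕ)} {p : Fin m → ℝ} :
    p ∈ newton Y ↔ ∃ q ∈ convexHull ℝ (emb '' Y), q ≤ p := by
  rw [newton_eq, Set.mem_add]
  constructor
  · rintro ⟨q, hq, w, hw, rfl⟩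
    exact ⟨q, hq, le_add_of_nonneg_right hw⟩
  · rintro ⟨q, hq, hle⟩
    exact ⟨q, hq, p - q, fun i => by have := hle i; simpa using this, by ring⟩

lemma newton_mono {Y Z : Set (Fin m →₀ ℕ)} (h : Y ⊆ Z) : newton Y ⊆ newton Z := by
  intro p hp
  rw [mem_newton] at hp ⊢
  obtain ⟨q, hq, hle⟩ := hp
  exact ⟨q, convexHull_mono (Set.image_mono h) hq, hle⟩

lemma mem_newton_self {Y : Set (Fin m →₀ ℕ)} {x : Fin m →₀ ℕ} (h : x ∈ Y) :
    emb x ∈ newton Y :=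
  mem_newton.2 ⟨emb x, subset_convexHull ℝ _ (Set.mem_image_of_mem _ h), le_refl _⟩

lemma newton_convex (Y : Set (Fin m →₀ ℕ)) : Convex ℝ (newton Y) := by
  rw [newton_eq]
  exact (convex_convexHull ℝ _).add convex_orthant

lemma newton_upward {Y : Set (Fin m →₀ ℕ)} {p p' : Fin m → ℝ}
    (hp : p ∈ newton Y) (h : p ≤ p') : p' ∈ newton Y := by
  rw [mem_newton] at hp ⊢
  obtain ⟨q, hq, hle⟩ := hp
  exact ⟨q, hq, le_trans hle h⟩

lemma newton_subset_of_forall {Y Z : Set (Fin m →₀ ℕ)}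
    (h : ∀ x ∈ Y, emb x ∈ newton Z) : newton Y ⊆ newton Z := by
  intro p hp
  rw [mem_newton] at hp
  obtain ⟨q, hq, hle⟩ := hp
  have hsub : convexHull ℝ (emb '' Y) ⊆ newton Z := by
    apply convexHull_min _ (newton_convex Z)
    rintro _ ⟨x, hx, rfl⟩
    exact h x hx
  exact newton_upward (hsub hq) hle

lemma newton_insert_of_mem {Y : Set (Fin m →₀ ℕ)} {v : Fin m →₀ ℕ}
    (h : emb v ∈ newton Y) : newton (insert v Y) = newton Y := by
  apply le_antisymm
  · apply newton_subset_of_forall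
    rintro x (rfl | hx)
    · exact h
    · exact mem_newton_self hx
  · exact newton_mono (Set.subset_insert _ _)

lemma newton_translate {Y : Set (Fin m →₀ ℕ)} {p : Fin m → ℝ} {c : Fin m →₀ ℕ}
    (hp : p ∈ newton Y) : p + emb c ∈ newton (Y + {c}) := by
  rw [mem_newton] at hp ⊢
  obtain ⟨q, hq, hle⟩ := hp
  refine ⟨q + emb c, ?_, by intro i; simpa using hle i⟩
  have : emb '' (Y + {c}) = emb '' Y + {emb c} := by
    rw [emb_image_add]; simp
  rw [this, convexHull_add, convexHull_singleton]
  exact ⟨q, hq, emb c, rfl, rfl⟩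

lemma mem_convexHull_insert' {S : Set (Fin m → ℝ)} {p q : Fin m → ℝ}
    (h : q ∈ convexHull ℝ (insert p S)) :
    q = p ∨ ∃ (a : ℝ) (z : Fin m → ℝ),
      z ∈ convexHull ℝ S ∧ 0 ≤ a ∧ a ≤ 1 ∧ q = a • p + (1-a) • z := by
  rcases S.eq_empty_or_nonempty with rfl | hS
  · left
    simpa using h
  · right
    rw [convexHull_insert hS, mem_convexJoin] at h
    obtain ⟨x, hx, z, hz, hseg⟩ := h
    rw [Set.mem_singleton_iff] at hx
    subst hx
    obtain ⟨a, b, ha, hb, hab, habq⟩ := hseg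
    refine ⟨a, z, hz, ha, by linarith, ?_⟩
    have hb' : b = 1 - a := by linarith
    rw [← habq, hb']

def tot (p : Fin m → ℝ) : ℝ := ∑ i, p i

lemma tot_mono {p q : Fin m → ℝ} (h : p ≤ q) : tot p ≤ tot q :=
  Finset.sum_le_sum (fun i _ => h i)

lemma tot_combo (a b : ℝ) (p q : Fin m → ℝ) : tot (a • p + b • q) = a * tot p + b * tot q := by
  simp only [tot, Pi.add_apply, Pi.smul_apply, smul_eq_mul, Finset.sum_add_distrib,
    ← Finset.mul_sum]

lemma tot_emb_lt {x y : Fin m →₀ ℕ} (h : x < y) : tot (emb x) + 1 ≤ tot (emb y) := by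
  have hle := h.le
  rw [Finsupp.le_def] at hle
  have hne : x ≠ y := h.ne
  have hlt : ∑ i, x i < ∑ i, y i := by
    apply Finset.sum_lt_sum (fun i _ => hle i)
    by_contra hall
    push_neg at hall
    apply hne
    ext i
    by_cases hi : i ∈ (Finset.univ : Finset (Fin m))
    · exact le_antisymm (hle i) (hall i hi)
    · simp at hi
  have : (∑ i, x i) + 1 ≤ ∑ i, y i := hlt
  have hx : tot (emb x) = ((∑ i, x i : ℕ) : ℝ) := by
    simp [tot, emb]
  have hy : tot (emb y) = ((∑ i, y i : ℕ) : ℝ) := by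
    simp [tot, emb]
  rw [hx, hy]
  exact_mod_cast this

def mins (X : Set (Fin m →₀ ℕ)) : Set (Fin m →₀ ℕ) := {x ∈ X | ∀ y ∈ X, ¬ y < x}

lemma mins_subset (X : Set (Fin m →₀ ℕ)) : mins X ⊆ X := fun _ h => h.1

lemma mins_finite (X : Set (Fin m →₀ ℕ)) : (mins X).Finite := by
  have hanti : IsAntichain (· ≤ ·) (mins X) := by
    intro a ha b hb hne hle
    exact hb.2 a ha.1 (lt_of_le_of_ne hle hne)
  exact hanti.finite_of_partiallyWellOrderedOn (Set.isPWO_of_wellQuasiOrderedLE (mins X))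

lemma exists_min_le {X : Set (Fin m →₀ ℕ)} {x : Fin m →₀ ℕ} (hx : x ∈ X) :
    ∃ μ ∈ mins X, μ ≤ x := by
  obtain ⟨z, ⟨hzX, hzx⟩, hmin⟩ := (wellFounded_lt (α := Fin m →₀ ℕ)).has_min
    {y | y ∈ X ∧ y ≤ x} ⟨x, hx, le_refl x⟩
  refine ⟨z, ⟨hzX, fun y hy hlt => ?_⟩, hzx⟩
  exact hmin y ⟨hy, le_trans hlt.le hzx⟩ hlt

lemma hard {X : Set (Fin m →₀ ℕ)} {x : Fin m →₀ ℕ} (hx : x ∈ mins X)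
    (h : emb x ∈ newton (X \ {x})) : emb x ∈ newton (mins X \ {x}) := by
  classical
  set C := convexHull ℝ (emb '' (mins X \ {x})) with hC
  rcases (mins X \ {x}).eq_empty_or_nonempty with hemp | ⟨z₀f, hz₀f⟩
  · -- every y in X \ {x} is strictly above x; contradiction with h
    exfalso
    have hkey : ∀ y ∈ X \ {x}, x < y := by
      intro y hy
      obtain ⟨μ, hμ, hμy⟩ := exists_min_le hy.1
      have hμx : μ = x := by
        by_contra hne
        have : μ ∈ mins X \ {x} := ⟨hμ, hne⟩
        rw [hemp] at this
        exact this
      subst hμx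
      exact lt_of_le_of_ne hμy (Ne.symm hy.2)
    have hhs : convexHull ℝ (emb '' (X \ {x})) ⊆ {p | tot (emb x) + 1 ≤ tot p} := by
      apply convexHull_min
      · rintro _ ⟨y, hy, rfl⟩
        exact tot_emb_lt (hkey y hy)
      · intro p hp q hq a b ha hb hab
        simp only [Set.mem_setOf_eq] at hp hq ⊢
        rw [tot_combo]
        have hab' : (a+b)*(tot (emb x)+1) = tot (emb x)+1 := by rw [hab]; ring
        nlinarith [mul_le_mul_of_nonneg_left hp ha, mul_le_mul_of_nonneg_left hq hb, hab']
    rw [mem_newton] at h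
    obtain ⟨q, hq, hle⟩ := h
    have h1 := hhs hq
    have h2 := tot_mono hle
    simp only [Set.mem_setOf_eq] at h1
    linarith
  · have hz₀ : emb z₀f ∈ C := subset_convexHull ℝ _ (Set.mem_image_of_mem _ hz₀f)
    set W : Set (Fin m → ℝ) := {p | ∃ (a : ℝ) (s : Fin m → ℝ), 0 ≤ a ∧ a ≤ 1 ∧ s ∈ C ∧
      (1-a) • s + a • emb x ≤ p ∧ (1-a) * tot s + a * (tot (emb x) + 1) ≤ tot p} with hW
    have hWconv : Convex ℝ W := by
      rintro p₁ ⟨a₁, s₁, ha₁0, ha₁1, hs₁, hle₁, htot₁⟩ p₂ ⟨a₂, s₂, ha₂0, ha₂1, hs₂, hle₂, htot₂⟩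
        t₁ t₂ ht₁ ht₂ ht
      by_cases hcase : t₁*(1-a₁) + t₂*(1-a₂) = 0
      · have h1 : t₁*(1-a₁) = 0 := by nlinarith
        have h2 : t₂*(1-a₂) = 0 := by nlinarith
        refine ⟨1, emb z₀f, by norm_num, by norm_num, hz₀, ?_, ?_⟩
        · intro i
          have e1 := hle₁ i
          have e2 := hle₂ i
          simp only [Pi.add_apply, Pi.smul_apply, smul_eq_mul] at e1 e2 ⊢
          have f1 : t₁*((1-a₁) * s₁ i + a₁ * emb x i) ≤ t₁ * p₁ i :=
            mul_le_mul_of_nonneg_left e1 ht₁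
          have f2 : t₂*((1-a₂) * s₂ i + a₂ * emb x i) ≤ t₂ * p₂ i :=
            mul_le_mul_of_nonneg_left e2 ht₂
          have g1 : t₁*(1-a₁)*(s₁ i) = 0 := by rw [h1]; ring
          have g2 : t₂*(1-a₂)*(s₂ i) = 0 := by rw [h2]; ring
          have g1' : t₁*(1-a₁)*(emb x i) = 0 := by rw [h1]; ring
          have g2' : t₂*(1-a₂)*(emb x i) = 0 := by rw [h2]; ring
          have ht' : (t₁+t₂)*(emb x i) = emb x i := by rw [ht]; ring
          nlinarith [f1, f2, g1, g2, g1', g2', ht']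
        · have f1 : t₁*((1-a₁) * tot s₁ + a₁ * (tot (emb x) + 1)) ≤ t₁ * tot p₁ :=
            mul_le_mul_of_nonneg_left htot₁ ht₁
          have f2 : t₂*((1-a₂) * tot s₂ + a₂ * (tot (emb x) + 1)) ≤ t₂ * tot p₂ :=
            mul_le_mul_of_nonneg_left htot₂ ht₂
          have g1 : t₁*(1-a₁)*(tot s₁) = 0 := by rw [h1]; ring
          have g2 : t₂*(1-a₂)*(tot s₂) = 0 := by rw [h2]; ring
          have g1' : t₁*(1-a₁)*(tot (emb x) + 1) = 0 := by rw [h1]; ring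
          have g2' : t₂*(1-a₂)*(tot (emb x) + 1) = 0 := by rw [h2]; ring
          have ht' : (t₁+t₂)*(tot (emb x) + 1) = tot (emb x) + 1 := by rw [ht]; ring
          have htot12 : tot (t₁ • p₁ + t₂ • p₂) = t₁ * tot p₁ + t₂ * tot p₂ := tot_combo _ _ _ _
          rw [htot12]
          nlinarith [f1, f2, g1, g2, g1', g2', ht']
      · have hβpos : 0 < t₁*(1-a₁) + t₂*(1-a₂) :=
          lt_of_le_of_ne (by nlinarith) (Ne.symm hcase)
        have hβa : t₁*(1-a₁) + t₂*(1-a₂) = 1 - (t₁*a₁ + t₂*a₂) := by nlinarith [ht]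
        refine ⟨t₁*a₁ + t₂*a₂,
          (t₁*(1-a₁)/(t₁*(1-a₁) + t₂*(1-a₂))) • s₁ +
            (t₂*(1-a₂)/(t₁*(1-a₁) + t₂*(1-a₂))) • s₂,
          by nlinarith, by nlinarith, ?_, ?_, ?_⟩
        · apply (convex_convexHull ℝ _) hs₁ hs₂
          · exact div_nonneg (mul_nonneg ht₁ (by linarith)) hβpos.le
          · exact div_nonneg (mul_nonneg ht₂ (by linarith)) hβpos.le
          · rw [← add_div, div_self hβpos.ne']
        · intro i
          have e1 := hle₁ i
          have e2 := hle₂ i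
          simp only [Pi.add_apply, Pi.smul_apply, smul_eq_mul] at e1 e2 ⊢
          have f1 : t₁*((1-a₁) * s₁ i + a₁ * emb x i) ≤ t₁ * p₁ i :=
            mul_le_mul_of_nonneg_left e1 ht₁
          have f2 : t₂*((1-a₂) * s₂ i + a₂ * emb x i) ≤ t₂ * p₂ i :=
            mul_le_mul_of_nonneg_left e2 ht₂
          have hsi : (1 - (t₁*a₁ + t₂*a₂)) *
              ((t₁*(1-a₁)/(t₁*(1-a₁) + t₂*(1-a₂))) * s₁ i +
                (t₂*(1-a₂)/(t₁*(1-a₁) + t₂*(1-a₂))) * s₂ i)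
              = t₁*(1-a₁)*s₁ i + t₂*(1-a₂)*s₂ i := by
            rw [← hβa]
            field_simp
          rw [hsi]
          linarith [f1, f2]
        · have f1 : t₁*((1-a₁) * tot s₁ + a₁ * (tot (emb x) + 1)) ≤ t₁ * tot p₁ :=
            mul_le_mul_of_nonneg_left htot₁ ht₁
          have f2 : t₂*((1-a₂) * tot s₂ + a₂ * (tot (emb x) + 1)) ≤ t₂ * tot p₂ :=
            mul_le_mul_of_nonneg_left htot₂ ht₂
          have hts : tot ((t₁*(1-a₁)/(t₁*(1-a₁) + t₂*(1-a₂))) • s₁ +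
              (t₂*(1-a₂)/(t₁*(1-a₁) + t₂*(1-a₂))) • s₂)
              = (t₁*(1-a₁)/(t₁*(1-a₁) + t₂*(1-a₂))) * tot s₁ +
                (t₂*(1-a₂)/(t₁*(1-a₁) + t₂*(1-a₂))) * tot s₂ := tot_combo _ _ _ _
          have htot12 : tot (t₁ • p₁ + t₂ • p₂) = t₁ * tot p₁ + t₂ * tot p₂ := tot_combo _ _ _ _
          rw [htot12, hts]
          have hsi : (1 - (t₁*a₁ + t₂*a₂)) *
              ((t₁*(1-a₁)/(t₁*(1-a₁) + t₂*(1-a₂))) * tot s₁ +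
                (t₂*(1-a₂)/(t₁*(1-a₁) + t₂*(1-a₂))) * tot s₂)
              = t₁*(1-a₁)*tot s₁ + t₂*(1-a₂)*tot s₂ := by
            rw [← hβa]
            field_simp
          rw [hsi]
          nlinarith [f1, f2, ht]
    have hgen : emb '' (X \ {x}) ⊆ W := by
      rintro _ ⟨y, hy, rfl⟩
      obtain ⟨μ, hμ, hμy⟩ := exists_min_le hy.1
      by_cases hμx : μ = x
      · subst hμx
        have hlt : μ < y := lt_of_le_of_ne hμy (Ne.symm hy.2)
        refine ⟨1, emb z₀f, by norm_num, by norm_num, hz₀, ?_, ?_⟩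
        · intro i
          simp only [Pi.add_apply, Pi.smul_apply, smul_eq_mul]
          have := (emb_le.1 hlt.le) i
          nlinarith [this]
        · have := tot_emb_lt hlt
          nlinarith [this]
      · refine ⟨0, emb μ, le_refl _, by norm_num, subset_convexHull ℝ _
          (Set.mem_image_of_mem _ ⟨hμ, hμx⟩), ?_, ?_⟩
        · intro i
          simp only [Pi.add_apply, Pi.smul_apply, smul_eq_mul]
          have := (emb_le.1 hμy) i
          nlinarith [this]
        · have := tot_mono (emb_le.1 hμy)
          nlinarith [this]
    rw [mem_newton] at h
    obtain ⟨q, hq, hle⟩ := h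
    have hqW : q ∈ W := convexHull_min hgen hWconv hq
    obtain ⟨a, s, ha0, ha1, hsC, hles, htots⟩ := hqW
    by_cases ha : a = 1
    · exfalso
      subst ha
      have := tot_mono hle
      nlinarith [htots, this]
    · have ha1' : a < 1 := lt_of_le_of_ne ha1 ha
      rw [mem_newton]
      refine ⟨s, hsC, ?_⟩
      intro i
      have e := hles i
      have e2 := hle i
      simp only [Pi.add_apply, Pi.smul_apply, smul_eq_mul] at e
      nlinarith [e, e2]

lemma vert_subset (X : Set (Fin m →₀ ℕ)) : vert X ⊆ X := fun _ h => h.1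

lemma mem_vert {X : Set (Fin m →₀ ℕ)} {x : Fin m →₀ ℕ} :
    x ∈ vert X ↔ x ∈ X ∧ emb x ∉ newton (X \ {x}) := Iff.rfl

/-- The swap lemma: removing a non-vertex does not change the vertex set,
assuming the induction hypothesis for the smaller set. -/
lemma vert_diff_eq {M : Set (Fin m →₀ ℕ)} {v : Fin m →₀ ℕ} (hv : v ∈ M)
    (hnv : emb v ∈ newton (M \ {v}))
    (hIH : newton (M \ {v}) = newton (vert (M \ {v}))) :
    vert (M \ {v}) = vert M := by
  apply Set.Subset.antisymm
  · -- hard direction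
    rintro y ⟨⟨hyM, hyv⟩, hy⟩
    rw [Set.mem_singleton_iff] at hyv
    refine ⟨hyM, fun hmem => ?_⟩
    -- D = (M \ {v}) \ {y}
    set D : Set (Fin m →₀ ℕ) := (M \ {v}) \ {y} with hD
    set C := convexHull ℝ (emb '' D) with hC
    have hMy : M \ {y} = insert v D := by
      ext u
      simp only [Set.mem_diff, Set.mem_insert_iff, Set.mem_singleton_iff, hD]
      constructor
      · rintro ⟨huM, huy⟩
        by_cases h : u = v
        · left; exact h
        · right; exact ⟨⟨huM, h⟩, huy⟩
      · rintro (rfl | ⟨⟨huM, huv⟩, huy⟩)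
        · exact ⟨hv, fun h => hyv h.symm⟩
        · exact ⟨huM, huy⟩
    rcases D.eq_empty_or_nonempty with hDemp | ⟨z₀f, hz₀f⟩
    · -- M \ {y} = {v} and M \ {v} = {y}; derive y = v
      have h1 : M \ {y} = {v} := by rw [hMy, hDemp]; simp
      have h2 : M \ {v} = {y} := by
        apply Set.Subset.antisymm
        · rintro u ⟨huM, huv⟩
          rw [Set.mem_singleton_iff] at huv ⊢
          by_contra huy
          have : u ∈ M \ {y} := ⟨huM, huy⟩
          rw [h1] at this
          exact huv this
        · rintro u rfl
          exact ⟨hyM, hyv⟩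
      rw [h1] at hmem
      rw [h2] at hnv
      rw [mem_newton] at hmem hnv
      obtain ⟨q, hq, hqle⟩ := hmem
      obtain ⟨r, hr, hrle⟩ := hnv
      simp only [Set.image_singleton, convexHull_singleton, Set.mem_singleton_iff] at hq hr
      subst hq; subst hr
      have : emb y = emb v := le_antisymm hrle hqle
      exact hyv (emb_inj this)
    · have hz₀ : emb z₀f ∈ C := subset_convexHull ℝ _ (Set.mem_image_of_mem _ hz₀f)
      -- decompose hmem
      rw [hMy, mem_newton] at hmem
      obtain ⟨q, hq, hqle⟩ := hmem
      rw [Set.image_insert_eq] at hq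
      -- decompose hnv via IH
      have hvmem : emb v ∈ newton (insert y D) := by
        rw [hIH] at hnv
        refine newton_mono ?_ hnv
        intro u hu
        by_cases h : u = y
        · left; exact h
        · right
          exact ⟨vert_subset _ hu, h⟩
      rw [mem_newton] at hvmem
      obtain ⟨r, hr, hrle⟩ := hvmem
      rw [Set.image_insert_eq] at hr
      -- extract coefficients
      have hq' : ∃ (a : ℝ) (z : Fin m → ℝ), z ∈ C ∧ 0 ≤ a ∧ a ≤ 1 ∧
          q = a • emb v + (1-a) • z := by
        rcases mem_convexHull_insert' hq with rfl | ⟨a, z, hz, h0, h1', heq⟩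
        · exact ⟨1, emb z₀f, hz₀, by norm_num, by norm_num, by
            funext i; simp⟩
        · exact ⟨a, z, hz, h0, h1', heq⟩
      have hr' : ∃ (c : ℝ) (z₂ : Fin m → ℝ), z₂ ∈ C ∧ 0 ≤ c ∧ c ≤ 1 ∧
          r = c • emb y + (1-c) • z₂ := by
        rcases mem_convexHull_insert' hr with rfl | ⟨c, z₂, hz₂, h0, h1', heq⟩
        · exact ⟨1, emb z₀f, hz₀, by norm_num, by norm_num, by
            funext i; simp⟩
        · exact ⟨c, z₂, hz₂, h0, h1', heq⟩
      obtain ⟨a, z, hz, ha0, ha1, rfl⟩ := hq'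
      obtain ⟨c, z₂, hz₂, hc0, hc1, rfl⟩ := hr'
      by_cases hac : a * c = 1
      · -- a = 1, c = 1, so emb v ≤ emb y and emb y ≤ emb v
        have ha : a = 1 := by nlinarith
        have hc : c = 1 := by nlinarith
        subst ha; subst hc
        have h1 : emb v ≤ emb y := by
          intro i
          have := hqle i
          simpa using this
        have h2 : emb y ≤ emb v := by
          intro i
          have := hrle i
          simpa using this
        exact hyv (emb_inj (le_antisymm h2 h1))
      · have hacle : a * c ≤ 1 := by nlinarith
        have haclt : a * c < 1 := lt_of_le_of_ne hacle hac
        have hpos : 0 < 1 - a * c := by linarith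
        -- w := (a*(1-c)/(1-a*c)) • z₂ + ((1-a)/(1-a*c)) • z ∈ C and w ≤ emb y
        have hwC : (a*(1-c)/(1-a*c)) • z₂ + ((1-a)/(1-a*c)) • z ∈ C := by
          apply (convex_convexHull ℝ _) hz₂ hz
          · exact div_nonneg (mul_nonneg ha0 (by linarith)) hpos.le
          · exact div_nonneg (by linarith) hpos.le
          · field_simp
            ring
        have hwle : (a*(1-c)/(1-a*c)) • z₂ + ((1-a)/(1-a*c)) • z ≤ emb y := by
          intro i
          have e1 := hqle i
          have e2 := hrle i
          simp only [Pi.add_apply, Pi.smul_apply, smul_eq_mul] at e1 e2 ⊢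
          -- a * (c * y + (1-c) * z₂) ≤ a * v;  a*v + (1-a)*z ≤ y
          have f1 : a * (c * emb y i + (1-c) * z₂ i) ≤ a * emb v i :=
            mul_le_mul_of_nonneg_left e2 ha0
          rw [div_mul_eq_mul_div, div_mul_eq_mul_div, ← add_div, div_le_iff₀ hpos]
          nlinarith [f1, e1]
        apply hy
        rw [mem_newton]
        exact ⟨_, hwC, hwle⟩
  · -- easy direction
    rintro y ⟨hyM, hy⟩
    have hyv : y ≠ v := by
      rintro rfl
      exact hy hnv
    refine ⟨⟨hyM, hyv⟩, fun hmem => ?_⟩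
    apply hy
    refine newton_mono ?_ hmem
    intro u hu
    exact ⟨hu.1.1, hu.2⟩

lemma newton_vert_finite : ∀ (n : ℕ) (M : Set (Fin m →₀ ℕ)), M.Finite → M.ncard = n →
    newton M = newton (vert M) := by
  intro n
  induction n using Nat.strong_induction_on with
  | _ n IH =>
    intro M hfin hcard
    by_cases hMv : M ⊆ vert M
    · rw [Set.Subset.antisymm (vert_subset M) hMv]
    · rw [Set.not_subset] at hMv
      obtain ⟨v, hvM, hvnv⟩ := hMv
      have hnv : emb v ∈ newton (M \ {v}) := by
        by_contra h
        exact hvnv ⟨hvM, h⟩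
      have hlt : (M \ {v}).ncard < n := by
        rw [← hcard]
        exact Set.ncard_diff_singleton_lt_of_mem hvM hfin
      have hIH : newton (M \ {v}) = newton (vert (M \ {v})) :=
        IH _ hlt _ hfin.diff rfl
      have hswap : vert (M \ {v}) = vert M := vert_diff_eq hvM hnv hIH
      have hins : newton M = newton (M \ {v}) := by
        have : M = insert v (M \ {v}) := by
          rw [Set.insert_diff_singleton, Set.insert_eq_self.2 hvM]
        conv_lhs => rw [this]
        exact newton_insert_of_mem hnv
      rw [hins, hIH, hswap]

lemma vert_subset_mins (X : Set (Fin m →₀ ℕ)) : vert X ⊆ mins X := by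
  rintro x ⟨hxX, hx⟩
  refine ⟨hxX, fun y hyX hlt => ?_⟩
  apply hx
  have hyx : y ≠ x := hlt.ne
  exact newton_upward (mem_newton_self ⟨hyX, hyx⟩) (emb_le.1 hlt.le)

lemma vert_mins (X : Set (Fin m →₀ ℕ)) : vert (mins X) = vert X := by
  apply Set.Subset.antisymm
  · rintro x ⟨hxm, hx⟩
    refine ⟨hxm.1, fun hmem => ?_⟩
    exact hx (hard hxm hmem)
  · rintro x ⟨hxX, hx⟩
    have hxm : x ∈ mins X := vert_subset_mins X ⟨hxX, hx⟩
    refine ⟨hxm, fun hmem => ?_⟩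
    apply hx
    refine newton_mono ?_ hmem
    exact Set.diff_subset_diff_left (mins_subset X)

lemma newton_mins (X : Set (Fin m →₀ ℕ)) : newton X = newton (mins X) := by
  apply Set.Subset.antisymm
  · apply newton_subset_of_forall
    intro x hx
    obtain ⟨μ, hμ, hμx⟩ := exists_min_le hx
    exact newton_upward (mem_newton_self hμ) (emb_le.1 hμx)
  · exact newton_mono (mins_subset X)

/-- Key theorem: the Newton polygon is generated by the vertices. -/
lemma newton_vert (X : Set (Fin m →₀ ℕ)) : newton X = newton (vert X) := by
  rw [newton_mins, newton_vert_finite ((mins X).ncard) (mins X) (mins_finite X) rfl,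
    vert_mins]

/-- If `vert X ⊆ A ⊆ X` then `A` and `X` have the same vertex sets. -/
lemma vert_between {X A : Set (Fin m →₀ ℕ)} (h1 : vert X ⊆ A) (h2 : A ⊆ X) :
    vert A = vert X := by
  apply Set.Subset.antisymm
  · rintro x ⟨hxA, hx⟩
    refine ⟨h2 hxA, fun hmem => ?_⟩
    by_cases hxv : x ∈ vert X
    · exact hxv.2 hmem
    · -- emb x ∈ newton (vert X) ⊆ newton (A \ {x})
      apply hx
      have hX : emb x ∈ newton X := mem_newton_self (h2 hxA)
      rw [newton_vert] at hX
      refine newton_mono ?_ hX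
      intro u hu
      refine ⟨h1 hu, ?_⟩
      rintro rfl
      exact hxv hu
  · rintro x ⟨hxX, hx⟩
    refine ⟨h1 ⟨hxX, hx⟩, fun hmem => ?_⟩
    apply hx
    refine newton_mono ?_ hmem
    exact Set.diff_subset_diff_left h2

/-- A vertex of a Minkowski sum decomposes uniquely. -/
lemma vert_add_unique {S T : Set (Fin m →₀ ℕ)} {v a b a' b' : Fin m →₀ ℕ}
    (hv : v ∈ vert (S + T)) (ha : a ∈ S) (hb : b ∈ T) (hab : a + b = v)
    (ha' : a' ∈ S) (hb' : b' ∈ T) (hab' : a' + b' = v) : a = a' ∧ b = b' := by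
  by_cases heq : a = a'
  · subst heq
    refine ⟨rfl, ?_⟩
    have : a + b = a + b' := by rw [hab, hab']
    exact add_left_cancel this
  · exfalso
    have hbb' : b ≠ b' := by
      rintro rfl
      apply heq
      have : a + b = a' + b := by rw [hab, hab']
      exact add_right_cancel this
    have h1 : a + b' ≠ v := by
      intro h
      apply hbb'
      rw [← hab] at h
      exact (add_left_cancel h).symm
    have h2 : a' + b ≠ v := by
      intro h
      apply heq
      rw [← hab] at h
      exact (add_right_cancel h).symm
    have hm1 : a + b' ∈ (S + T) \ {v} := ⟨⟨a, ha, b', hb', rfl⟩, h1⟩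
    have hm2 : a' + b ∈ (S + T) \ {v} := ⟨⟨a', ha', b, hb, rfl⟩, h2⟩
    apply hv.2
    rw [mem_newton]
    refine ⟨(1/2 : ℝ) • emb (a + b') + (1/2 : ℝ) • emb (a' + b), ?_, ?_⟩
    · apply (convex_convexHull ℝ _)
        (subset_convexHull ℝ _ (Set.mem_image_of_mem _ hm1))
        (subset_convexHull ℝ _ (Set.mem_image_of_mem _ hm2)) <;> norm_num
    · intro i
      simp only [Pi.add_apply, Pi.smul_apply, smul_eq_mul, emb_add]
      have h3 : emb a i + emb b i = emb v i := by
        rw [← hab, emb_add]; simp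
      have h4 : emb a' i + emb b' i = emb v i := by
        rw [← hab', emb_add]; simp
      linarith

lemma vert_add_subset {S T : Set (Fin m →₀ ℕ)} : vert (S + T) ⊆ vert S + vert T := by
  intro v hv
  obtain ⟨a, ha, b, hb, hab⟩ := (vert_subset _ hv : v ∈ S + T)
  replace hab : a + b = v := hab
  have haS : a ∈ vert S := by
    refine ⟨ha, fun hmem => ?_⟩
    apply hv.2
    have h2 := newton_translate hmem (c := b)
    rw [← emb_add, hab] at h2
    refine newton_mono ?_ h2
    rintro u ⟨w, hw, c, hc, rfl⟩
    rw [Set.mem_singleton_iff] at hc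
    refine ⟨⟨w, hw.1, c, hc ▸ hb, rfl⟩, fun h => ?_⟩
    rw [Set.mem_singleton_iff] at h
    have huniq := vert_add_unique hv hw.1 (hc ▸ hb) h ha hb hab
    exact hw.2 huniq.1
  have hbT : b ∈ vert T := by
    refine ⟨hb, fun hmem => ?_⟩
    apply hv.2
    have h2 := newton_translate hmem (c := a)
    have hab2 : b + a = v := by rw [add_comm]; exact hab
    rw [← emb_add, hab2] at h2
    refine newton_mono ?_ h2
    rintro u ⟨w, hw, c, hc, rfl⟩
    rw [Set.mem_singleton_iff] at hc
    refine ⟨⟨c, hc ▸ ha, w, hw.1, add_comm c w⟩, fun h => ?_⟩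
    rw [Set.mem_singleton_iff] at h
    have h' : c + w = v := by rw [add_comm]; exact h
    have huniq := vert_add_unique hv (hc ▸ ha) hw.1 h' ha hb hab
    exact hw.2 huniq.2
  exact ⟨a, haS, b, hbT, hab⟩

lemma vert_vert_add (S T : Set (Fin m →₀ ℕ)) : vert (vert S + vert T) = vert (S + T) :=
  vert_between vert_add_subset (Set.add_subset_add (vert_subset S) (vert_subset T))



lemma supp_mul_subset {m : ℕ} (φ ψ : MvPowerSeries (Fin m) K) :
    supp (φ * ψ) ⊆ supp φ + supp ψ := by
  classical
  intro L hL
  simp only [supp, Set.mem_setOf_eq, MvPowerSeries.coeff_mul] at hL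
  obtain ⟨pq, hpq, hne⟩ := Finset.exists_ne_zero_of_sum_ne_zero hL
  rw [Finset.HasAntidiagonal.mem_antidiagonal] at hpq
  exact ⟨pq.1, left_ne_zero_of_mul hne, pq.2, right_ne_zero_of_mul hne, hpq⟩

lemma vert_subset_supp_mul {m : ℕ} (φ ψ : MvPowerSeries (Fin m) K) :
    vert (supp φ + supp ψ) ⊆ supp (φ * ψ) := by
  classical
  intro v hv
  obtain ⟨a, ha, b, hb, hab⟩ := (vert_subset _ hv : v ∈ supp φ + supp ψ)
  replace hab : a + b = v := hab
  simp only [supp, Set.mem_setOf_eq, MvPowerSeries.coeff_mul]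
  have hsum : ∑ pq ∈ Finset.HasAntidiagonal.antidiagonal v,
      MvPowerSeries.coeff pq.1 φ * MvPowerSeries.coeff pq.2 ψ
      = MvPowerSeries.coeff a φ * MvPowerSeries.coeff b ψ := by
    apply Finset.sum_eq_single (a, b)
    · rintro ⟨p, q⟩ hpq hne
      rw [Finset.HasAntidiagonal.mem_antidiagonal] at hpq
      by_cases hp : MvPowerSeries.coeff p φ = 0
      · rw [hp, zero_mul]
      by_cases hq : MvPowerSeries.coeff q ψ = 0
      · rw [hq, mul_zero]
      exfalso
      have := vert_add_unique hv hp hq hpq ha hb hab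
      apply hne
      rw [Prod.mk.injEq]
      exact this
    · intro h
      exfalso
      apply h
      rw [Finset.HasAntidiagonal.mem_antidiagonal]
      exact hab
  rw [hsum]
  exact mul_ne_zero ha hb

lemma trop_mul {m : ℕ} (φ ψ : MvPowerSeries (Fin m) K) :
    trop (φ * ψ) = odot (trop φ) (trop ψ) := by
  have h1 : vert (supp (φ * ψ)) = vert (supp φ + supp ψ) :=
    vert_between (vert_subset_supp_mul φ ψ) (supp_mul_subset φ ψ)
  have h2 : vert (vert (supp φ) + vert (supp ψ)) = vert (supp φ + supp ψ) :=
    vert_vert_add _ _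
  show vert (supp (φ * ψ)) = vert (trop φ + trop ψ)
  rw [h1]
  show vert (supp φ + supp ψ) = vert (vert (supp φ) + vert (supp ψ))
  rw [h2]

lemma trop_zero {m : ℕ} : trop (0 : MvPowerSeries (Fin m) K) = ∅ := by
  have : supp (0 : MvPowerSeries (Fin m) K) = ∅ := by
    ext L
    simp [supp]
  rw [trop, this]
  ext x
  simp [vert, this]

lemma supp_one {m : ℕ} : supp (1 : MvPowerSeries (Fin m) K) = {0} := by
  classical
  ext L
  simp only [supp, Set.mem_setOf_eq, MvPowerSeries.coeff_one, Set.mem_singleton_iff]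
  by_cases h : L = 0 <;> simp [h]

lemma vert_singleton_zero {m : ℕ} : vert ({0} : Set (Fin m →₀ ℕ)) = {0} := by
  ext x
  simp only [vert, Set.mem_setOf_eq, Set.mem_singleton_iff, Set.diff_self]
  constructor
  · rintro ⟨h, -⟩; exact h
  · rintro rfl
    refine ⟨rfl, fun h => ?_⟩
    have hemp : ({0} : Set (Fin m →₀ ℕ)) \ {0} = ∅ := Set.diff_self
    rw [hemp] at h
    have hne : newton (∅ : Set (Fin m →₀ ℕ)) = ∅ := by
      rw [newton, Set.empty_add, Set.image_empty, convexHull_empty]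
    rw [hne] at h
    exact h

lemma supp_neg_one {m : ℕ} : supp (-1 : MvPowerSeries (Fin m) K) = {0} := by
  classical
  ext L
  simp only [supp, Set.mem_setOf_eq, map_neg, MvPowerSeries.coeff_one, neg_ne_zero,
    Set.mem_singleton_iff]
  by_cases h : L = 0 <;> simp [h]

end TropAux


/-- The tropicalization map is multiplicative, sends `0` to `∅` and `±1` to
`{(0,…,0)}`. -/
theorem trop_multiplicative (K : Type) [Field K] (m : ℕ) (hm : 1 ≤ m) :
    (∀ φ ψ : MvPowerSeries (Fin m) K, trop (φ * ψ) = odot (trop φ) (trop ψ)) ∧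
    trop (0 : MvPowerSeries (Fin m) K) = ∅ ∧
    trop (1 : MvPowerSeries (Fin m) K) = {0} ∧
    trop (-1 : MvPowerSeries (Fin m) K) = {0} := by
  refine ⟨fun φ ψ => TropAux.trop_mul φ ψ, TropAux.trop_zero, ?_, ?_⟩
  · rw [trop, TropAux.supp_one, TropAux.vert_singleton_zero]
  · rw [trop, TropAux.supp_neg_one, TropAux.vert_singleton_zero]

end
end

section
/- Let K be an algebraically closed field of characteristic zero, m, n ≥ 1. Let Δ be a finite set of finitely supported maps M : {1,…,n} × ℤ_{≥0}^m → ℤ_{≥0}, and for each M ∈ Δ let α_M ∈ K[[t_1,…,t_m]] be nonzero. Suppose φ = (φ_1,…,φ_n) ∈ K[[t_1,…,t_m]]^n satisfies Σ_{M∈Δ} α_M · ∏_{i,J}(Θ(J)φ_i)^{M_{i,J}} = 0. Let S_i = Supp(φ_i) and for each M ∈ Δ set B_M = Supp(α_M) + Σ_{i,J} M_{i,J}·Θ_trop(J)(S_i) (iterated Minkowski sums, with k·X the k-fold Minkowski sum and 0·X = {(0,…,0)}). Then for every vertex J ∈ Vert(⋃_{M∈Δ} B_M) there exist M_1, M_2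 ∈ Δ with M_1 ≠ M_2 such that J ∈ Vert(B_{M_1}) and J ∈ Vert(B_{M_2}). (That is, the support of any power series solution of a differential polynomial is a solution of its tropicalization.) -/
open Pointwise

noncomputable section

variable {K : Type} [Field K]

/-- The iterated formal partial derivative `Θ(J)φ`, defined by its coefficients:
the coefficient of `t^L` in `Θ(J)φ` is `((L+J)!/L!) · a_{L+J}`. -/
def theta {m : ℕ} (J : Fin m →₀ ℕ) (φ : MvPowerSeries (Fin m) K) :
    MvPowerSeries (Fin m) K :=
  fun L => ((∏ i : Fin m, ((L i + J i).factorial / (L i).factorial) : ℕ) : K) *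
    MvPowerSeries.coeff (L + J) φ

/-- The tropical derivative operator. -/
def thetaTrop {m : ℕ} (J : Fin m →₀ ℕ) (T : Set (Fin m →₀ ℕ)) : Set (Fin m →₀ ℕ) :=
  {L | L + J ∈ T}

/-- `k`-fold Minkowski sum `kX = X + ⋯ + X`, with `0X = {(0,…,0)}`. -/
def nMink {m : ℕ} : ℕ → Set (Fin m →₀ ℕ) → Set (Fin m →₀ ℕ)
  | 0, _ => {0}
  | k + 1, X => X + nMink k X

-- auxiliary lemmas

lemma emb_add {m : ℕ} (a b : Fin m →₀ ℕ) : emb (a + b) = emb a + emb b := by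
  funext i; simp [emb]

lemma newton_mono {m : ℕ} {X Y : Set (Fin m →₀ ℕ)} (h : X ⊆ Y) : newton X ⊆ newton Y :=
  convexHull_mono (Set.image_mono (Set.add_subset_add_right h))

lemma mem_newton {m : ℕ} {X : Set (Fin m →₀ ℕ)} {x : Fin m →₀ ℕ} (hx : x ∈ X) :
    emb x ∈ newton X := by
  apply subset_convexHull
  exact ⟨x, Set.mem_add.2 ⟨x, hx, 0, Set.mem_univ 0, add_zero x⟩, rfl⟩

def embHom {m : ℕ} : (Fin m →₀ ℕ) →+ (Fin m → ℝ) where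
  toFun := emb
  map_zero' := by funext i; simp [emb]
  map_add' := emb_add

lemma emb_image_add {m : ℕ} (A B : Set (Fin m →₀ ℕ)) :
    emb '' (A + B) = emb '' A + emb '' B := Set.image_add (embHom (m := m))

lemma newton_translate {m : ℕ} {X : Set (Fin m →₀ ℕ)} {a : Fin m →₀ ℕ} (b : Fin m →₀ ℕ)
    (h : emb a ∈ newton X) : emb (a + b) ∈ newton (X + {b}) := by
  have key : newton (X + {b}) = newton X + {emb b} := by
    unfold newton
    rw [add_right_comm X {b}, emb_image_add, convexHull_add]
    congr 1
    rw [Set.image_singleton, convexHull_singleton]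
  rw [key, emb_add]
  exact Set.add_mem_add h rfl

lemma vert_of_subset {m : ℕ} {X Y : Set (Fin m →₀ ℕ)} {J : Fin m →₀ ℕ}
    (hXY : X ⊆ Y) (hJ : J ∈ vert Y) (hJX : J ∈ X) : J ∈ vert X :=
  ⟨hJX, fun h => hJ.2 (newton_mono (Set.diff_subset_diff_left hXY) h)⟩

-- a factor of a vertex of a Minkowski sum is a vertex of its summand
lemma vert_factor_left {m : ℕ} {X Y : Set (Fin m →₀ ℕ)} {J a b : Fin m →₀ ℕ}
    (hJ : J ∈ vert (X + Y)) (ha : a ∈ X) (hb : b ∈ Y) (hab : a + b = J) :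
    a ∈ vert X := by
  refine ⟨ha, fun hcon => hJ.2 ?_⟩
  have h1 : emb (a + b) ∈ newton ((X \ {a}) + {b}) := newton_translate b hcon
  rw [hab] at h1
  refine newton_mono ?_ h1
  intro z hz
  obtain ⟨x, hx, y, hy, hxy⟩ := Set.mem_add.1 hz
  rw [Set.mem_singleton_iff] at hy
  refine ⟨?_, ?_⟩
  · rw [← hxy, hy]
    exact Set.add_mem_add hx.1 hb
  · intro hzJ
    rw [Set.mem_singleton_iff] at hzJ
    apply hx.2
    rw [Set.mem_singleton_iff]
    have hxb : x + b = a + b := by rw [hab, ← hzJ, ← hxy, hy]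
    exact add_right_cancel hxb

lemma vert_factor_right {m : ℕ} {X Y : Set (Fin m →₀ ℕ)} {J a b : Fin m →₀ ℕ}
    (hJ : J ∈ vert (X + Y)) (ha : a ∈ X) (hb : b ∈ Y) (hab : a + b = J) :
    b ∈ vert Y := by
  refine vert_factor_left (X := Y) (Y := X) ?_ hb ha (by rw [add_comm, hab])
  rwa [add_comm Y X]

-- uniqueness of decompositions of a vertex of a Minkowski sum
lemma vert_add_unique {m : ℕ} {X Y : Set (Fin m →₀ ℕ)} {J a a' b b' : Fin m →₀ ℕ}
    (hJ : J ∈ vert (X + Y)) (ha : a ∈ X) (hb : b ∈ Y) (hab : a + b = J)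
    (ha' : a' ∈ X) (hb' : b' ∈ Y) (hab' : a' + b' = J) : a = a' ∧ b = b' := by
  by_contra hcon
  have hane : a ≠ a' := by
    intro h; subst h
    exact hcon ⟨rfl, add_left_cancel (hab.trans hab'.symm)⟩
  have h1 : a + b' ≠ J := fun h => hane (add_right_cancel (h.trans hab'.symm))
  have h2 : a' + b ≠ J := fun h => hane (add_right_cancel (hab.trans h.symm) : a = a')
  apply hJ.2
  have m1 : emb (a + b') ∈ newton ((X + Y) \ {J}) :=
    mem_newton ⟨Set.add_mem_add ha hb', h1⟩
  have m2 : emb (a' + b) ∈ newton ((X + Y) \ {J}) :=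
    mem_newton ⟨Set.add_mem_add ha' hb, h2⟩
  have hmid : emb J = (1/2 : ℝ) • emb (a + b') + (1/2 : ℝ) • emb (a' + b) := by
    funext i
    have e1 : a i + b i = J i := by rw [← hab]; simp
    have e2 : a' i + b' i = J i := by rw [← hab']; simp
    simp only [emb, Pi.add_apply, Pi.smul_apply, smul_eq_mul, Finsupp.add_apply]
    have f1 : ((a i : ℝ) + b i) = (J i : ℝ) := by exact_mod_cast congrArg Nat.cast e1
    have f2 : ((a' i : ℝ) + b' i) = (J i : ℝ) := by exact_mod_cast congrArg Nat.cast e2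
    push_cast
    linarith
  rw [hmid]
  exact (convex_convexHull ℝ _) m1 m2 (by norm_num) (by norm_num) (by norm_num)

-- the "good" predicate
def Good {m : ℕ} (f : MvPowerSeries (Fin m) K) (X : Set (Fin m →₀ ℕ)) : Prop :=
  supp f ⊆ X ∧ ∀ J ∈ vert X, MvPowerSeries.coeff J f ≠ 0

lemma good_mul {m : ℕ} {f g : MvPowerSeries (Fin m) K} {X Y : Set (Fin m →₀ ℕ)}
    (hf : Good f X) (hg : Good g Y) : Good (f * g) (X + Y) := by
  constructor
  · intro L hL
    rw [supp, Set.mem_setOf_eq, MvPowerSeries.coeff_mul] at hL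
    obtain ⟨p, hp, hne⟩ := Finset.exists_ne_zero_of_sum_ne_zero hL
    rw [Finset.HasAntidiagonal.mem_antidiagonal] at hp
    rw [← hp]
    exact Set.add_mem_add (hf.1 (left_ne_zero_of_mul hne)) (hg.1 (right_ne_zero_of_mul hne))
  · intro J hJ
    obtain ⟨a, ha, b, hb, hab⟩ := Set.mem_add.1 hJ.1
    have hav : a ∈ vert X := vert_factor_left hJ ha hb hab
    have hbv : b ∈ vert Y := vert_factor_right hJ ha hb hab
    rw [MvPowerSeries.coeff_mul, Finset.sum_eq_single (a, b)]
    · exact mul_ne_zero (hf.2 a hav) (hg.2 b hbv)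
    · intro p hp hpne
      by_contra hnz
      have h1 : MvPowerSeries.coeff p.1 f ≠ 0 := left_ne_zero_of_mul hnz
      have h2 : MvPowerSeries.coeff p.2 g ≠ 0 := right_ne_zero_of_mul hnz
      rw [Finset.HasAntidiagonal.mem_antidiagonal] at hp
      obtain ⟨e1, e2⟩ := vert_add_unique hJ ha hb hab (hf.1 h1) (hg.1 h2) hp
      apply hpne
      rw [Prod.ext_iff]
      exact ⟨e1.symm, e2.symm⟩
    · intro h
      exact absurd (Finset.HasAntidiagonal.mem_antidiagonal.2 hab) h

lemma zero_set {m : ℕ} : (0 : Set (Fin m →₀ ℕ)) = {0} := Set.ext fun _ => by simp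

lemma good_one {m : ℕ} : Good (1 : MvPowerSeries (Fin m) K) (0 : Set (Fin m →₀ ℕ)) := by
  constructor
  · intro L hL
    rw [supp, Set.mem_setOf_eq, MvPowerSeries.coeff_one] at hL
    rw [Set.mem_zero]
    by_contra h
    simp [h] at hL
  · intro J hJ
    have hJ0 : J = 0 := Set.mem_zero.1 hJ.1
    subst hJ0
    simp [MvPowerSeries.coeff_zero_one]

lemma good_pow {m : ℕ} {f : MvPowerSeries (Fin m) K} {X : Set (Fin m →₀ ℕ)}
    (hf : Good f X) : ∀ k : ℕ, Good (f ^ k) (nMink k X)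
  | 0 => by
    rw [pow_zero]
    have h0 : (nMink 0 X : Set (Fin m →₀ ℕ)) = 0 := zero_set.symm
    rw [h0]
    exact good_one
  | k + 1 => by
    rw [pow_succ']
    exact good_mul hf (good_pow hf k)

lemma good_prod {m : ℕ} {ι : Type} (s : Finset ι) (f : ι → MvPowerSeries (Fin m) K)
    (X : ι → Set (Fin m →₀ ℕ)) (h : ∀ i ∈ s, Good (f i) (X i)) :
    Good (∏ i ∈ s, f i) (∑ i ∈ s, X i) := by
  induction s using Finset.cons_induction with
  | empty => simpa using good_one
  | cons i s his ih =>
    rw [Finset.prod_cons, Finset.sum_cons]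
    exact good_mul (h i (Finset.mem_cons_self i s))
      (ih fun j hj => h j (Finset.mem_cons_of_mem hj))

lemma good_theta {m : ℕ} [CharZero K] (J : Fin m →₀ ℕ) (ψ : MvPowerSeries (Fin m) K) :
    Good (theta J ψ) (thetaTrop J (supp ψ)) := by
  have hc : ∀ L : Fin m →₀ ℕ,
      ((∏ i : Fin m, ((L i + J i).factorial / (L i).factorial) : ℕ) : K) ≠ 0 := by
    intro L
    rw [Nat.cast_ne_zero]
    exact (Finset.prod_pos fun i _ =>
      Nat.div_pos (Nat.factorial_le (Nat.le_add_right _ _)) (Nat.factorial_pos _)).ne'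
  have hco : ∀ L : Fin m →₀ ℕ, MvPowerSeries.coeff L (theta J ψ) =
      ((∏ i : Fin m, ((L i + J i).factorial / (L i).factorial) : ℕ) : K) *
        MvPowerSeries.coeff (L + J) ψ := fun L => rfl
  constructor
  · intro L hL
    rw [supp, Set.mem_setOf_eq, hco] at hL
    exact right_ne_zero_of_mul hL
  · intro L hL
    have hmem : L + J ∈ supp ψ := hL.1
    rw [hco]
    exact mul_ne_zero (hc L) hmem

open MvPowerSeries in
/-- The support of a power series solution of a differential polynomial is a
solution of the tropicalization of that differential polynomial. -/
theorem support_of_solution_is_tropical_solution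
    (K : Type) [Field K] [IsAlgClosed K] [CharZero K] (m n : ℕ)
    (hm : 1 ≤ m) (hn : 1 ≤ n)
    (Δ : Finset ((Fin n × (Fin m →₀ ℕ)) →₀ ℕ))
    (α : ((Fin n × (Fin m →₀ ℕ)) →₀ ℕ) → MvPowerSeries (Fin m) K)
    (hα : ∀ M ∈ Δ, α M ≠ 0)
    (φ : Fin n → MvPowerSeries (Fin m) K)
    (hφ : ∑ M ∈ Δ, α M * (M.prod fun p k => theta p.2 (φ p.1) ^ k) = 0)
    (S : Fin n → Set (Fin m →₀ ℕ)) (hS : ∀ i, S i = supp (φ i))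
    (B : ((Fin n × (Fin m →₀ ℕ)) →₀ ℕ) → Set (Fin m →₀ ℕ))
    (hB : ∀ M, B M = supp (α M) + M.sum fun p k => nMink k (thetaTrop p.2 (S p.1))) :
    ∀ J ∈ vert (⋃ M ∈ Δ, B M), ∃ M₁ ∈ Δ, ∃ M₂ ∈ Δ,
      M₁ ≠ M₂ ∧ J ∈ vert (B M₁) ∧ J ∈ vert (B M₂) := by
  intro J hJ
  -- each term is "good" for B M
  have goodM : ∀ M : (Fin n × (Fin m →₀ ℕ)) →₀ ℕ,
      Good (α M * (M.prod fun p k => theta p.2 (φ p.1) ^ k)) (B M) := by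
    intro M
    rw [hB M, Finsupp.prod, Finsupp.sum]
    refine good_mul ⟨subset_rfl, fun L hL => hL.1⟩ ?_
    refine good_prod _ _ _ fun p _ => ?_
    rw [hS p.1]
    exact good_pow (good_theta p.2 (φ p.1)) (M p)
  -- J lies in some B M₁
  obtain ⟨M₁, hM₁Δ, hJB₁⟩ := Set.mem_iUnion₂.1 hJ.1
  have hv₁ : J ∈ vert (B M₁) :=
    vert_of_subset (Set.subset_iUnion₂ (s := fun M _ => B M) M₁ hM₁Δ) hJ hJB₁
  have hc₁ : MvPowerSeries.coeff J (α M₁ * (M₁.prod fun p k => theta p.2 (φ p.1) ^ k)) ≠ 0 :=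
    (goodM M₁).2 J hv₁
  have hsum : ∑ M ∈ Δ,
      MvPowerSeries.coeff J (α M * (M.prod fun p k => theta p.2 (φ p.1) ^ k)) = 0 := by
    rw [← map_sum, hφ, map_zero]
  have hex : ∃ M₂ ∈ Δ, M₂ ≠ M₁ ∧
      MvPowerSeries.coeff J (α M₂ * (M₂.prod fun p k => theta p.2 (φ p.1) ^ k)) ≠ 0 := by
    by_contra hcon
    push_neg at hcon
    have := Finset.sum_eq_single_of_mem M₁ hM₁Δ fun M hM hne => hcon M hM hne
    rw [this] at hsum
    exact hc₁ hsum
  obtain ⟨M₂, hM₂Δ, hne, hc₂⟩ := hex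
  have hJB₂ : J ∈ B M₂ := (goodM M₂).1 hc₂
  have hv₂ : J ∈ vert (B M₂) :=
    vert_of_subset (Set.subset_iUnion₂ (s := fun M _ => B M) M₂ hM₂Δ) hJ hJB₂
  exact ⟨M₁, hM₁Δ, M₂, hM₂Δ, hne.symm, hv₁, hv₂⟩

end
end
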